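/- Let 1 < p < 2 with conjugate p', let (M, μ) be a measure space, and f ∈ L^p(μ; ℝ^N) with f ≠ 0. Define β_k := f·(|f|² + 1/k)^{(p−2)/2}. Then β_k ∈ L^{p'}(μ; ℝ^N) with ‖β_k‖_{p'}^{p'} → ‖f‖_p^p as k → ∞, and ∫ ⟨f, β_k⟩ dμ → ‖f‖_p^p as k → ∞. -/

import Mathlib

open MeasureTheory Filter

/-- Key computational lemma of the duality argument: with `1 < p < 2`, `p'` conjugate,
`f ∈ L^p(μ; ℝ^N)` nonzero, and `β_k := (|f|² + 1/k)^{(p−2)/2} f`, each `β_k ∈ L^{p'}`,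
`‖β_k‖_{p'}^{p'} → ‖f‖_p^p` and `∫⟨f, β_k⟩ → ‖f‖_p^p`. -/
theorem duality_test_functions {α : Type*} [MeasurableSpace α] (μ : Measure α)
    {N : ℕ} (p p' : ℝ) (hp1 : 1 < p) (hp2 : p < 2) (hconj : 1 / p + 1 / p' = 1)
    (f : α → EuclideanSpace ℝ (Fin N))
    (hf : MemLp f (ENNReal.ofReal p) μ) (hfne : ¬ f =ᵐ[μ] 0) :
    (∀ k : ℕ, MemLp
        (fun x => ((‖f x‖ ^ 2 + 1 / ((k : ℝ) + 1)) ^ ((p - 2) / 2)) • f x)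
        (ENNReal.ofReal p') μ) ∧
    Tendsto (fun k : ℕ =>
        ∫ x, ‖((‖f x‖ ^ 2 + 1 / ((k : ℝ) + 1)) ^ ((p - 2) / 2)) • f x‖ ^ p' ∂μ)
      atTop (nhds (∫ x, ‖f x‖ ^ p ∂μ)) ∧
    Tendsto (fun k : ℕ =>
        ∫ x, (inner ℝ (f x)
          (((‖f x‖ ^ 2 + 1 / ((k : ℝ) + 1)) ^ ((p - 2) / 2)) • f x) : ℝ) ∂μ)
      atTop (nhds (∫ x, ‖f x‖ ^ p ∂μ)) := by
  have hp0 : (0:ℝ) < p := by linarith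
  have hp1' : (0:ℝ) < p - 1 := by linarith
  have hp'pos : 0 < p' := by
    have h1 : 1 / p < 1 := by rw [div_lt_one hp0]; exact hp1
    have h2 : 0 < 1 / p' := by linarith
    exact one_div_pos.mp h2
  have hp'eq : p' = p / (p - 1) := by
    field_simp at hconj ⊢
    linarith
  have hpp' : (p - 1) * p' = p := by
    rw [hp'eq]; field_simp
  have hεk : ∀ k : ℕ, (0:ℝ) < 1 / ((k : ℝ) + 1) := fun k => by positivity
  -- basic rpow algebra
  have hsq : ∀ a : ℝ, 0 < a → (a ^ 2) ^ ((p - 2) / 2) = a ^ (p - 2) := by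
    intro a ha
    rw [← Real.rpow_natCast a 2, ← Real.rpow_mul ha.le]
    congr 1; ring
  have hstep : ∀ a : ℝ, 0 < a → a ^ (p - 2) * a = a ^ (p - 1) := by
    intro a ha
    rw [← Real.rpow_add_one ha.ne']
    congr 1; ring
  have hstep1 : ∀ a : ℝ, 0 ≤ a → a ^ (p - 1) * a = a ^ p := by
    intro a ha
    rcases ha.eq_or_lt with h | h
    · rw [← h, mul_zero, Real.zero_rpow hp0.ne']
    · rw [← Real.rpow_add_one h.ne']; congr 1; ring
  have hnormp : ∀ a : ℝ, 0 ≤ a → (a ^ (p - 1)) ^ p' = a ^ p := by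
    intro a ha
    rw [← Real.rpow_mul ha, hpp']
  have hbound : ∀ a ε : ℝ, 0 ≤ a → 0 < ε →
      (a ^ 2 + ε) ^ ((p - 2) / 2) * a ≤ a ^ (p - 1) := by
    intro a ε ha hε
    rcases ha.eq_or_lt with h | h
    · rw [← h, mul_zero, Real.zero_rpow hp1'.ne']
    · have h2 : (0:ℝ) < a ^ 2 := by positivity
      calc (a ^ 2 + ε) ^ ((p - 2) / 2) * a
          ≤ (a ^ 2) ^ ((p - 2) / 2) * a := by
            apply mul_le_mul_of_nonneg_right _ ha
            exact Real.rpow_le_rpow_of_nonpos h2 (by linarith) (by linarith)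
        _ = a ^ (p - 1) := by rw [hsq a h, hstep a h]
  -- norm of β_k
  have hg_norm : ∀ (k : ℕ) (x : α),
      ‖((‖f x‖ ^ 2 + 1 / ((k : ℝ) + 1)) ^ ((p - 2) / 2)) • f x‖
        = (‖f x‖ ^ 2 + 1 / ((k : ℝ) + 1)) ^ ((p - 2) / 2) * ‖f x‖ := by
    intro k x
    rw [norm_smul, Real.norm_eq_abs,
      abs_of_nonneg (Real.rpow_nonneg (by positivity) _)]
  have hgle : ∀ (k : ℕ) (x : α),
      ‖((‖f x‖ ^ 2 + 1 / ((k : ℝ) + 1)) ^ ((p - 2) / 2)) • f x‖ ≤ ‖f x‖ ^ (p - 1) := by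
    intro k x
    rw [hg_norm]
    exact hbound _ _ (norm_nonneg _) (hεk k)
  -- measurability
  have hsm : ∀ k : ℕ, AEStronglyMeasurable
      (fun x => ((‖f x‖ ^ 2 + 1 / ((k : ℝ) + 1)) ^ ((p - 2) / 2)) • f x) μ := by
    intro k
    have hcont : Continuous (fun t : ℝ => (t ^ 2 + 1 / ((k : ℝ) + 1)) ^ ((p - 2) / 2)) := by
      rw [continuous_iff_continuousAt]
      intro t
      exact ContinuousAt.rpow_const (by fun_prop) (Or.inl (by positivity))
    exact (hcont.comp_aestronglyMeasurable hf.1.norm).smul hf.1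
  -- integrable bound
  have hint : Integrable (fun x => ‖f x‖ ^ p) μ := by
    have h := hf.integrable_norm_rpow (by simp [ENNReal.ofReal_eq_zero]; linarith)
      ENNReal.ofReal_ne_top
    simpa [ENNReal.toReal_ofReal hp0.le] using h
  -- membership in L^{p'}
  have hmem : ∀ k : ℕ, MemLp
      (fun x => ((‖f x‖ ^ 2 + 1 / ((k : ℝ) + 1)) ^ ((p - 2) / 2)) • f x)
      (ENNReal.ofReal p') μ := by
    intro k
    have hq : MemLp (fun x => ‖f x‖ ^ (p - 1)) (ENNReal.ofReal p') μ := by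
      have h := hf.norm_rpow_div (ENNReal.ofReal (p - 1))
      have h1 : (ENNReal.ofReal (p - 1)).toReal = p - 1 := ENNReal.toReal_ofReal hp1'.le
      have h2 : ENNReal.ofReal p / ENNReal.ofReal (p - 1) = ENNReal.ofReal p' := by
        rw [hp'eq, ENNReal.ofReal_div_of_pos hp1']
      rw [h1, h2] at h
      exact h
    refine hq.of_le (hsm k) (Filter.Eventually.of_forall fun x => ?_)
    rw [Real.norm_eq_abs, abs_of_nonneg (Real.rpow_nonneg (norm_nonneg _) _)]
    exact hgle k x
  -- pointwise scalar convergence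
  have hscal : ∀ x : α, Tendsto
      (fun k : ℕ => (‖f x‖ ^ 2 + 1 / ((k : ℝ) + 1)) ^ ((p - 2) / 2) * ‖f x‖)
      atTop (nhds (‖f x‖ ^ (p - 1))) := by
    intro x
    rcases (norm_nonneg (f x)).eq_or_lt with h | h
    · have heq : (fun k : ℕ => (‖f x‖ ^ 2 + 1 / ((k : ℝ) + 1)) ^ ((p - 2) / 2) * ‖f x‖)
          = fun _ => (0:ℝ) := by
        funext k; rw [← h, mul_zero]
      rw [heq, ← h, Real.zero_rpow hp1'.ne']
      exact tendsto_const_nhds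
    · have h1 : Tendsto (fun k : ℕ => ‖f x‖ ^ 2 + 1 / ((k : ℝ) + 1)) atTop
          (nhds (‖f x‖ ^ 2 + 0)) :=
        tendsto_const_nhds.add tendsto_one_div_add_atTop_nhds_zero_nat
      have hb : ContinuousAt (fun s : ℝ => s ^ ((p - 2) / 2)) (‖f x‖ ^ 2 + 0) :=
        Real.continuousAt_rpow_const _ _ (Or.inl (by positivity))
      have h2 := (hb.tendsto.comp h1).mul (tendsto_const_nhds (x := ‖f x‖))
      rw [add_zero, hsq _ h, hstep _ h] at h2
      exact h2
  constructor
  · exact hmem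
  constructor
  · -- second part
    apply tendsto_integral_of_dominated_convergence (fun x => ‖f x‖ ^ p)
      (fun k => (Real.continuous_rpow_const hp'pos.le).comp_aestronglyMeasurable (hsm k).norm)
      hint
    · intro k
      refine Filter.Eventually.of_forall fun x => ?_
      rw [Real.norm_eq_abs, abs_of_nonneg (Real.rpow_nonneg (norm_nonneg _) _)]
      calc ‖((‖f x‖ ^ 2 + 1 / ((k : ℝ) + 1)) ^ ((p - 2) / 2)) • f x‖ ^ p'
          ≤ (‖f x‖ ^ (p - 1)) ^ p' :=
            Real.rpow_le_rpow (norm_nonneg _) (hgle k x) hp'pos.le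
        _ = ‖f x‖ ^ p := hnormp _ (norm_nonneg _)
    · refine Filter.Eventually.of_forall fun x => ?_
      have hc : ContinuousAt (fun s : ℝ => s ^ p') (‖f x‖ ^ (p - 1)) :=
        Real.continuousAt_rpow_const _ _ (Or.inr hp'pos.le)
      have h2 := hc.tendsto.comp (hscal x)
      rw [hnormp _ (norm_nonneg _)] at h2
      have heq : (fun k : ℕ =>
          ((‖f x‖ ^ 2 + 1 / ((k : ℝ) + 1)) ^ ((p - 2) / 2) * ‖f x‖) ^ p')
          = fun k : ℕ =>
            ‖((‖f x‖ ^ 2 + 1 / ((k : ℝ) + 1)) ^ ((p - 2) / 2)) • f x‖ ^ p' := by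
        funext k; rw [hg_norm]
      rw [← heq]
      exact h2
  · -- third part
    have hinner : ∀ (k : ℕ) (x : α),
        (inner ℝ (f x) (((‖f x‖ ^ 2 + 1 / ((k : ℝ) + 1)) ^ ((p - 2) / 2)) • f x) : ℝ)
          = ((‖f x‖ ^ 2 + 1 / ((k : ℝ) + 1)) ^ ((p - 2) / 2) * ‖f x‖) * ‖f x‖ := by
      intro k x
      rw [real_inner_smul_right, real_inner_self_eq_norm_sq]
      ring
    apply tendsto_integral_of_dominated_convergence (fun x => ‖f x‖ ^ p)
      (fun k => hf.1.inner (hsm k)) hint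
    · intro k
      refine Filter.Eventually.of_forall fun x => ?_
      rw [hinner k x, Real.norm_eq_abs, abs_of_nonneg (by positivity :
        (0:ℝ) ≤ (‖f x‖ ^ 2 + 1 / ((k : ℝ) + 1)) ^ ((p - 2) / 2) * ‖f x‖ * ‖f x‖)]
      calc (‖f x‖ ^ 2 + 1 / ((k : ℝ) + 1)) ^ ((p - 2) / 2) * ‖f x‖ * ‖f x‖
          ≤ ‖f x‖ ^ (p - 1) * ‖f x‖ :=
            mul_le_mul_of_nonneg_right (hbound _ _ (norm_nonneg _) (hεk k)) (norm_nonneg _)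
        _ = ‖f x‖ ^ p := hstep1 _ (norm_nonneg _)
    · refine Filter.Eventually.of_forall fun x => ?_
      have h2 := (hscal x).mul (tendsto_const_nhds (x := ‖f x‖))
      rw [hstep1 _ (norm_nonneg _)] at h2
      simp_rw [hinner]
      exact h2
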